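/- For even n, the limit as r → 0⁺ of Ω_n(r) (defined by the double finite sum formula with ₂F₁ functions) equals 2·(-1)^{n/2+1}·(2^{n/2} - 1)·n! / ((n/2 + 1)!). -/

import Mathlib

open Real Filter

/-- Pochhammer (rising factorial) symbol `(a)_k`. -/
noncomputable def poch (a : ℝ) (k : ℕ) : ℝ := ∏ i ∈ Finset.range k, (a + i)

/-- Gauss hypergeometric series `₂F₁(a,b;c;z)`. -/
noncomputable def F21 (a b c z : ℝ) : ℝ :=
  ∑' k : ℕ, poch a k * poch b k / poch c k * z^k / (k.factorial : ℝ)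

lemma poch_succ (a : ℝ) (k : ℕ) : poch a (k+1) = poch a k * (a + k) := by
  simp [poch, Finset.prod_range_succ]

lemma abs_poch_le (a : ℝ) (k : ℕ) : |poch a k| ≤ poch |a| k := by
  induction k with
  | zero => simp [poch]
  | succ k ih =>
    rw [poch_succ, poch_succ, abs_mul]
    have h1 : |a + (k:ℝ)| ≤ |a| + k := by
      calc |a + (k:ℝ)| ≤ |a| + |(k:ℝ)| := abs_add_le _ _
      _ = |a| + k := by rw [abs_of_nonneg (k.cast_nonneg : (0:ℝ) ≤ k)]
    have h2 : (0:ℝ) ≤ |a| + k := by positivity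
    exact mul_le_mul ih h1 (abs_nonneg _) (le_trans (abs_nonneg _) ih)

lemma poch_nonneg (a : ℝ) (ha : 0 ≤ a) (k : ℕ) : 0 ≤ poch a k := by
  induction k with
  | zero => simp [poch]
  | succ k ih =>
    rw [poch_succ]
    have : (0:ℝ) ≤ a + k := by positivity
    exact mul_nonneg ih this

lemma factorial_le_poch (c : ℝ) (hc : 1 ≤ c) (k : ℕ) : (k.factorial : ℝ) ≤ poch c k := by
  induction k with
  | zero => simp [poch]
  | succ k ih =>
    rw [poch_succ, Nat.factorial_succ]
    push_cast
    have h1 : ((k:ℝ) + 1) ≤ c + k := by linarith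
    calc ((k:ℝ)+1) * k.factorial ≤ (c + k) * poch c k := by
          apply mul_le_mul h1 ih (by positivity)
          positivity
    _ = poch c k * (c + k) := by ring

lemma poch_pos (c : ℝ) (hc : 1 ≤ c) (k : ℕ) : 0 < poch c k :=
  lt_of_lt_of_le (by positivity) (factorial_le_poch c hc k)

lemma tendsto_F21 (a b c : ℝ) (hc : 1 ≤ c) :
    Tendsto (fun z : ℝ => F21 a b c z) (nhds 0) (nhds 1) := by
  set bound : ℕ → ℝ := fun k =>
    poch |a| k * poch |b| k / poch c k / (k.factorial : ℝ) * (2⁻¹)^k with hbound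
  have hbnn : ∀ k, 0 ≤ bound k := by
    intro k
    have := poch_pos c hc k
    have := poch_nonneg |a| (abs_nonneg a) k
    have := poch_nonneg |b| (abs_nonneg b) k
    positivity
  have hsum : Summable bound := by
    apply summable_of_ratio_norm_eventually_le (r := 3/4) (by norm_num)
    have hK : ∀ᶠ k : ℕ in atTop, 5 * (|a| + |b|) + 5 ≤ (k : ℝ) := by
      obtain ⟨K, hK⟩ := exists_nat_ge (5 * (|a| + |b|) + 5)
      filter_upwards [eventually_ge_atTop K] with k hk
      exact le_trans hK (by exact_mod_cast hk)
    filter_upwards [hK] with k hk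
    have hpc := poch_pos c hc k
    have hpa := poch_nonneg |a| (abs_nonneg a) k
    have hpb := poch_nonneg |b| (abs_nonneg b) k
    have hfk : (0:ℝ) < (k.factorial : ℝ) := by positivity
    have habs : |a| ≤ (k:ℝ)/5 := by
      have h0 := abs_nonneg b; linarith
    have hbabs : |b| ≤ (k:ℝ)/5 := by
      have h0 := abs_nonneg a; linarith
    have hck : (0:ℝ) < c + k := by
      have : (0:ℝ) ≤ (k:ℝ) := Nat.cast_nonneg k; linarith
    have key : (|a| + k) * (|b| + k) * 2⁻¹ ≤ (3/4) * ((c + k) * (k+1)) := by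
      have h3 : (3/4 : ℝ) * ((c + k) * (k+1)) ≥ (3/4) * (k * k) := by
        have hk0 : (0:ℝ) ≤ k := Nat.cast_nonneg k
        nlinarith
      have h4 : (|a| + (k:ℝ)) * (|b| + k) ≤ (36/25) * (k*k) := by
        have hk0 : (0:ℝ) ≤ k := Nat.cast_nonneg k
        nlinarith [abs_nonneg a, abs_nonneg b]
      nlinarith [sq_nonneg ((k:ℝ))]
    have hx : (|a|+k)*(|b|+k)*2⁻¹ / ((c+k)*((k:ℝ)+1)) ≤ 3/4 := by
      rw [div_le_iff₀ (by positivity)]; linarith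
    have e1 : bound (k+1) = bound k * ((|a|+k)*(|b|+k)*2⁻¹ / ((c+k)*((k:ℝ)+1))) := by
      rw [hbound]
      simp only [poch_succ, Nat.factorial_succ, pow_succ]
      push_cast
      field_simp
    rw [Real.norm_eq_abs, Real.norm_eq_abs, abs_of_nonneg (hbnn _), abs_of_nonneg (hbnn _), e1]
    calc bound k * ((|a|+k)*(|b|+k)*2⁻¹ / ((c+k)*((k:ℝ)+1)))
        ≤ bound k * (3/4) := mul_le_mul_of_nonneg_left hx (hbnn k)
      _ = 3/4 * bound k := by ring
  have hfun : ∀ k : ℕ, Tendsto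
      (fun z : ℝ => poch a k * poch b k / poch c k * z^k / (k.factorial : ℝ))
      (nhds 0) (nhds (if k = 0 then 1 else 0)) := by
    intro k
    rcases Nat.eq_zero_or_pos k with rfl | hk
    · simp [poch]
    · have : Tendsto (fun z : ℝ => z^k) (nhds 0) (nhds 0) := by
        have h := (continuous_pow k).tendsto (0:ℝ)
        rwa [zero_pow hk.ne'] at h
      have := ((this.const_mul (poch a k * poch b k / poch c k)).div_const (k.factorial : ℝ))
      simpa [hk.ne', mul_comm] using this
  have hb : ∀ᶠ z : ℝ in nhds 0, ∀ k : ℕ,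
      ‖poch a k * poch b k / poch c k * z^k / (k.factorial : ℝ)‖ ≤ bound k := by
    filter_upwards [eventually_abs_sub_lt (0:ℝ) (by norm_num : (0:ℝ) < 2⁻¹)] with z hz k
    rw [sub_zero] at hz
    have hpc := poch_pos c hc k
    have hfk : (0:ℝ) < (k.factorial : ℝ) := by positivity
    rw [Real.norm_eq_abs, abs_div, abs_of_pos hfk, abs_mul, abs_div, abs_of_pos hpc,
      abs_mul, abs_pow, hbound]
    have h1 : |poch a k| * |poch b k| ≤ poch |a| k * poch |b| k :=
      mul_le_mul (abs_poch_le a k) (abs_poch_le b k) (abs_nonneg _)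
        (poch_nonneg _ (abs_nonneg a) k)
    have h2 : |z|^k ≤ (2⁻¹:ℝ)^k := pow_le_pow_left₀ (abs_nonneg z) hz.le k
    have hnum : |poch a k| * |poch b k| * |z|^k ≤ poch |a| k * poch |b| k * (2⁻¹)^k :=
      mul_le_mul h1 h2 (by positivity)
        (mul_nonneg (poch_nonneg _ (abs_nonneg a) k) (poch_nonneg _ (abs_nonneg b) k))
    calc |poch a k| * |poch b k| / poch c k * |z| ^ k / (k.factorial:ℝ)
        = (|poch a k| * |poch b k| * |z|^k) / (poch c k * (k.factorial:ℝ)) := by ring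
      _ ≤ (poch |a| k * poch |b| k * (2⁻¹)^k) / (poch c k * (k.factorial:ℝ)) := by
          apply div_le_div_of_nonneg_right hnum
          positivity
      _ = poch |a| k * poch |b| k / poch c k / (k.factorial:ℝ) * (2⁻¹:ℝ)^k := by ring
  have := tendsto_tsum_of_dominated_convergence (𝓕 := nhds 0)
    (g := fun k : ℕ => if k = 0 then (1:ℝ) else 0) hsum hfun hb
  have hts : (∑' k : ℕ, if k = 0 then (1:ℝ) else 0) = 1 := by
    rw [tsum_eq_single 0] <;> simp
  rw [hts] at this
  exact this

lemma sum_odd_range (v : ℕ → ℝ) (p : ℕ) :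
    ∑ k ∈ Finset.range (2*p+1), (if k % 2 = 1 then v (k/2) else 0)
      = ∑ m ∈ Finset.range p, v m := by
  induction p with
  | zero => simp
  | succ p ih =>
    rw [show 2*(p+1)+1 = (2*p+1)+1+1 by ring, Finset.sum_range_succ, Finset.sum_range_succ,
      ih, Finset.sum_range_succ]
    have h1 : (2*p+1) % 2 = 1 := by omega
    have h2 : (2*p+1+1) % 2 = 0 := by omega
    have h3 : (2*p+1) / 2 = p := by omega
    rw [if_pos h1, if_neg (by omega), h3, add_zero]

lemma choose_sum (p : ℕ) :
    ∑ m ∈ Finset.range p, (p+1).choose (m+1) = 2^(p+1) - 2 := by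
  have h := Nat.sum_range_choose (p+1)
  rw [show p + 1 + 1 = (p+1)+1 from rfl, Finset.sum_range_succ] at h
  rw [Finset.sum_range_succ'] at h
  simp only [Nat.choose_zero_right, Nat.choose_self] at h
  omega

lemma final_sum (n p : ℕ) :
    ∑ m ∈ Finset.range p, (n.factorial:ℝ) /
        (((p-m).factorial:ℝ) * ((m+1).factorial:ℝ))
      = (2*(2:ℝ)^p - 2) * (n.factorial:ℝ) / (((p+1).factorial:ℝ)) := by
  have hterm : ∀ m ∈ Finset.range p,
      (n.factorial:ℝ) / (((p-m).factorial:ℝ) * ((m+1).factorial:ℝ))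
        = (((p+1).choose (m+1) : ℕ):ℝ) * (n.factorial:ℝ) / (((p+1).factorial:ℝ)) := by
    intro m hm
    have hmp : m + 1 ≤ p + 1 := by
      have := Finset.mem_range.mp hm; omega
    have hch : ((p+1).choose (m+1)) * (m+1).factorial * ((p+1)-(m+1)).factorial
        = (p+1).factorial := Nat.choose_mul_factorial_mul_factorial hmp
    have hch' : (((p+1).choose (m+1) : ℕ):ℝ) * (((m+1).factorial:ℝ) * (((p-m).factorial:ℝ)))
        = ((p+1).factorial:ℝ) := by
      have he : (p+1)-(m+1) = p - m := by omega
      rw [he] at hch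
      rw [← mul_assoc]
      exact_mod_cast hch
    have f1 : (0:ℝ) < ((p-m).factorial:ℝ) := by exact_mod_cast Nat.factorial_pos _
    have f2 : (0:ℝ) < ((m+1).factorial:ℝ) := by exact_mod_cast Nat.factorial_pos _
    have f3 : (0:ℝ) < (((p+1).factorial:ℝ)) := by exact_mod_cast Nat.factorial_pos _
    field_simp
    nlinarith [hch']
  rw [Finset.sum_congr rfl hterm, ← Finset.sum_div, ← Finset.sum_mul, ← Nat.cast_sum]
  rw [choose_sum p]
  have h2 : 2 ≤ 2^(p+1) := by
    calc 2 = 2^1 := rfl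
    _ ≤ 2^(p+1) := Nat.pow_le_pow_right (by norm_num) (by omega)
  have : ((2^(p+1) - 2 : ℕ):ℝ) = 2*(2:ℝ)^p - 2 := by
    push_cast [Nat.cast_sub h2]
    ring
  rw [this]

/-- The coefficient `Ω_n` (for even `n`) given by the double finite sum of Eq. (32),
for real `r`; terms with non-positive Gamma arguments vanish via `1/Γ = 0`. -/
noncomputable def OmegaEven (n : ℕ) (r : ℝ) : ℝ :=
  (-1:ℝ)^(n/2) * ∑ k ∈ Finset.range (n+1), ∑ j ∈ Finset.range (k+1),
    ((-1:ℝ)^k * (n.factorial : ℝ) /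
        Real.Gamma ((n:ℝ)/2 - j + 1) / Real.Gamma ((k:ℝ) - j + 1)) *
    (F21 (1 + (j:ℝ)) (1 + (j:ℝ) - k + (n:ℝ)/2) (2 + 2*(j:ℝ) - k) (r^2) /
        Real.Gamma (2 + 2*(j:ℝ) - k)) *
    r ^ (2*(j:ℤ) - (k:ℤ) + 1)

/-- Eq. (35): the limit of `Ω_n(r)` as `r → 0⁺`, for even `n`. -/
theorem OmegaEven_limit_at_zero (n : ℕ) (hn : Even n) :
    Tendsto (fun r : ℝ => OmegaEven n r) (nhdsWithin 0 (Set.Ioi 0))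
      (nhds (2 * (-1:ℝ)^(n/2 + 1) * ((2:ℝ)^(n/2) - 1) * (n.factorial : ℝ) /
        ((n/2 + 1).factorial : ℝ))) := by
  obtain ⟨p, hp⟩ := hn
  have hn2 : n / 2 = p := by omega
  have hnp : n = 2 * p := by omega
  have hsq : Tendsto (fun r : ℝ => r^2) (nhdsWithin 0 (Set.Ioi 0)) (nhds 0) := by
    have h := (continuous_pow 2).tendsto (0:ℝ)
    rw [zero_pow (by norm_num : (2:ℕ) ≠ 0)] at h
    exact h.mono_left nhdsWithin_le_nhds
  set L : ℕ → ℕ → ℝ := fun k j => if k = 2*j+1 then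
      ((-1:ℝ)^k * (n.factorial : ℝ) /
        Real.Gamma ((n:ℝ)/2 - j + 1) / Real.Gamma ((k:ℝ) - j + 1))
    else 0 with hL
  have hterm : ∀ k ∈ Finset.range (n+1), ∀ j ∈ Finset.range (k+1),
      Tendsto (fun r : ℝ =>
        ((-1:ℝ)^k * (n.factorial : ℝ) /
            Real.Gamma ((n:ℝ)/2 - j + 1) / Real.Gamma ((k:ℝ) - j + 1)) *
        (F21 (1 + (j:ℝ)) (1 + (j:ℝ) - k + (n:ℝ)/2) (2 + 2*(j:ℝ) - k) (r^2) /
            Real.Gamma (2 + 2*(j:ℝ) - k)) *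
        r ^ (2*(j:ℤ) - (k:ℤ) + 1)) (nhdsWithin 0 (Set.Ioi 0)) (nhds (L k j)) := by
    intro k hk j hj
    rcases lt_trichotomy k (2*j+1) with hkj | hkj | hkj
    · -- exponent ≥ 1 : limit 0
      set m := 2*j - k with hm
      have hmm : 2*j = k + m := by omega
      have hmr : 2*(j:ℝ) = (k:ℝ) + m := by exact_mod_cast hmm
      have hc1 : 2 + 2*(j:ℝ) - k = (m:ℝ) + 2 := by linarith
      have hz : 2*(j:ℤ) - (k:ℤ) + 1 = ((m+1 : ℕ) : ℤ) := by omega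
      have hpow : Tendsto (fun r : ℝ => r^(m+1)) (nhdsWithin 0 (Set.Ioi 0)) (nhds 0) := by
        have h := (continuous_pow (m+1)).tendsto (0:ℝ)
        rw [zero_pow (Nat.succ_ne_zero m)] at h
        exact h.mono_left nhdsWithin_le_nhds
      have hF : Tendsto (fun r : ℝ =>
          F21 (1 + (j:ℝ)) (1 + (j:ℝ) - k + (n:ℝ)/2) ((m:ℝ) + 2) (r^2))
          (nhdsWithin 0 (Set.Ioi 0)) (nhds 1) := by
        have h1 : (1:ℝ) ≤ (m:ℝ) + 2 := by
          have : (0:ℝ) ≤ (m:ℝ) := Nat.cast_nonneg m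
          linarith
        exact (tendsto_F21 _ _ _ h1).comp hsq
      rw [hL]
      simp only [if_neg (by omega : ¬ k = 2*j+1)]
      simp only [hc1, hz, zpow_natCast]
      have := ((hF.div_const (Real.Gamma ((m:ℝ)+2))).const_mul
        ((-1:ℝ)^k * (n.factorial : ℝ) /
          Real.Gamma ((n:ℝ)/2 - j + 1) / Real.Gamma ((k:ℝ) - j + 1))).mul hpow
      simpa using this
    · -- exponent = 0 : limit is the coefficient
      have hkr : (k:ℝ) = 2*(j:ℝ) + 1 := by exact_mod_cast hkj
      have hc1 : 2 + 2*(j:ℝ) - k = 1 := by linarith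
      have hz : 2*(j:ℤ) - (k:ℤ) + 1 = 0 := by omega
      rw [hL]
      simp only [if_pos hkj]
      simp only [hc1, hz, zpow_zero, mul_one, Real.Gamma_one, div_one]
      have hF : Tendsto (fun r : ℝ =>
          F21 (1 + (j:ℝ)) (1 + (j:ℝ) - k + (n:ℝ)/2) 1 (r^2))
          (nhdsWithin 0 (Set.Ioi 0)) (nhds 1) :=
        (tendsto_F21 _ _ _ le_rfl).comp hsq
      have := hF.const_mul ((-1:ℝ)^k * (n.factorial : ℝ) /
          Real.Gamma ((n:ℝ)/2 - j + 1) / Real.Gamma ((k:ℝ) - j + 1))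
      simpa using this
    · -- Gamma factor vanishes : term identically 0
      set m := k - (2*j + 2) with hm
      have hmm : k = 2*j + 2 + m := by omega
      have hkr : (k:ℝ) = 2*(j:ℝ) + 2 + m := by exact_mod_cast hmm
      have hc1 : 2 + 2*(j:ℝ) - k = -(m:ℝ) := by linarith
      rw [hL]
      simp only [if_neg (by omega : ¬ k = 2*j+1)]
      simp only [hc1, Real.Gamma_neg_nat_eq_zero, div_zero, mul_zero, zero_mul]
      exact tendsto_const_nhds
  have hsumT := tendsto_finset_sum (Finset.range (n+1))
    (fun k hk => tendsto_finset_sum (Finset.range (k+1)) (fun j hj => hterm k hk j hj))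
  have hmain := hsumT.const_mul ((-1:ℝ)^(n/2))
  have hval : (-1:ℝ)^(n/2) * (∑ k ∈ Finset.range (n+1), ∑ j ∈ Finset.range (k+1), L k j)
      = 2 * (-1:ℝ)^(n/2 + 1) * ((2:ℝ)^(n/2) - 1) * (n.factorial : ℝ) /
        ((n/2 + 1).factorial : ℝ) := by
    have hn2r : (n:ℝ)/2 = (p:ℝ) := by rw [hnp]; push_cast; ring
    set v : ℕ → ℝ := fun m =>
      -((n.factorial : ℝ) / (((p-m).factorial:ℝ) * ((m+1).factorial:ℝ))) with hv
    have hinner : ∀ k ∈ Finset.range (n+1),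
        (∑ j ∈ Finset.range (k+1), L k j) = if k % 2 = 1 then v (k/2) else 0 := by
      intro k hk
      rcases Nat.even_or_odd k with he | ho
      · obtain ⟨t, ht⟩ := he
        rw [if_neg (show ¬ k % 2 = 1 by omega)]
        apply Finset.sum_eq_zero
        intro j hj
        simp only [hL]
        rw [if_neg (show ¬ k = 2*j+1 by omega)]
      · obtain ⟨m, hmo⟩ := ho
        have hk2 : k / 2 = m := by omega
        rw [if_pos (by omega : k % 2 = 1), hk2]
        have hmp : m + 1 ≤ p := by
          have := Finset.mem_range.mp hk
          omega
        have hcongr : ∀ j ∈ Finset.range (k+1),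
            L k j = if j = m then v m else 0 := by
          intro j hj
          simp only [hL]
          by_cases hjm : j = m
          · subst hjm
            rw [if_pos (show k = 2*j+1 by omega), if_pos rfl]
            have hkr : (k:ℝ) = 2*(j:ℝ) + 1 := by exact_mod_cast (show k = 2*j+1 by omega)
            have hg1 : Real.Gamma ((n:ℝ)/2 - j + 1) = ((p-j).factorial:ℝ) := by
              have hcast : (n:ℝ)/2 - j + 1 = ((p-j : ℕ):ℝ) + 1 := by
                rw [hn2r, Nat.cast_sub (show j ≤ p by omega)]
              rw [hcast, Real.Gamma_nat_eq_factorial]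
            have hg2 : Real.Gamma ((k:ℝ) - j + 1) = ((j+1).factorial:ℝ) := by
              have hcast : (k:ℝ) - j + 1 = ((j+1 : ℕ):ℝ) + 1 := by
                rw [hkr]; push_cast; ring
              rw [hcast, Real.Gamma_nat_eq_factorial]
            have hneg : (-1:ℝ)^k = -1 := Odd.neg_one_pow ⟨j, by omega⟩
            rw [hg1, hg2, hneg, hv]
            have f1 : (0:ℝ) < (((p-j).factorial:ℝ)) := by exact_mod_cast Nat.factorial_pos _
            have f2 : (0:ℝ) < (((j+1).factorial:ℝ)) := by exact_mod_cast Nat.factorial_pos _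
            field_simp
          · rw [if_neg (show ¬ k = 2*j+1 by omega), if_neg hjm]
        rw [Finset.sum_congr rfl hcongr, Finset.sum_ite_eq' (Finset.range (k+1)) m]
        rw [if_pos (Finset.mem_range.mpr (by omega : m < k + 1))]
    rw [Finset.sum_congr rfl hinner]
    have hrange : n + 1 = 2*p + 1 := by omega
    rw [hrange, sum_odd_range v p]
    simp only [hv]
    rw [Finset.sum_neg_distrib, final_sum n p]
    rw [hn2, pow_succ]
    have f3 : (0:ℝ) < (((p+1).factorial:ℝ)) := by exact_mod_cast Nat.factorial_pos _
    field_simp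
  rw [← hval]
  simp only [OmegaEven]
  exact hmain
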